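/- The formulas ξ_n · a_{10} = e^{(i/p)[α + λn + λq(p+1)/2]} ξ_{n+q} and ξ_n · a_{01} = ξ_{n−p} (for p ≠ 0), respectively ξ_n · a_{10} = ξ_{n+q} and ξ_n · a_{01} = e^{(i/q)[α + λn]} ξ_n (for p = 0, q ≠ 0), define a right A-module structure T^α_{pq} on the vector space with basis {ξ_n : n ∈ ℤ}, i.e. they are compatible with the relation a_{10} a_{01} = e^{iλ} a_{01} a_{10}. -/
import Mathlib


/-- The action of the generator `a_{10}` on the module `T^α_{pq}` with basis
`{ξ_n : n ∈ ℤ}` (realized as `ℤ →₀ ℂ`):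
`ξ_n ↦ e^{(i/p)[α + λn + λq(p+1)/2]} ξ_{n+q}` for `p ≠ 0`, and `ξ_n ↦ ξ_{n+q}` for `p = 0`. -/
noncomputable def Uop (lam α : ℝ) (p q : ℤ) : (ℤ →₀ ℂ) →ₗ[ℂ] (ℤ →₀ ℂ) :=
  Finsupp.lsum ℂ fun n => LinearMap.toSpanSingleton ℂ (ℤ →₀ ℂ)
    (Finsupp.single (n + q)
      (if p = 0 then 1 else
        Complex.exp (Complex.I *
          ((α + lam * n + lam * q * ((p : ℝ) + 1) / 2) / (p : ℝ)))))

/-- The action of the generator `a_{01}` on the module `T^α_{pq}`: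
`ξ_n ↦ ξ_{n-p}` for `p ≠ 0`, and `ξ_n ↦ e^{(i/q)[α + λn]} ξ_n` for `p = 0`. -/
noncomputable def Vop (lam α : ℝ) (p q : ℤ) : (ℤ →₀ ℂ) →ₗ[ℂ] (ℤ →₀ ℂ) :=
  Finsupp.lsum ℂ fun n => LinearMap.toSpanSingleton ℂ (ℤ →₀ ℂ)
    (if p = 0 then Finsupp.single n (Complex.exp (Complex.I * ((α + lam * n) / (q : ℝ))))
     else Finsupp.single (n - p) 1)

lemma Uop_single' (lam α : ℝ) (p q : ℤ) (n : ℤ) (c : ℂ) :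
    Uop lam α p q (Finsupp.single n c) =
      Finsupp.single (n + q)
        (c * (if p = 0 then 1 else
          Complex.exp (Complex.I *
            ((α + lam * n + lam * q * ((p : ℝ) + 1) / 2) / (p : ℝ))))) := by
  rw [Uop, Finsupp.lsum_single, LinearMap.toSpanSingleton_apply, Finsupp.smul_single,
    smul_eq_mul]

lemma Vop_single' (lam α : ℝ) (p q : ℤ) (n : ℤ) (c : ℂ) :
    Vop lam α p q (Finsupp.single n c) =
      (if p = 0 then Finsupp.single n (c * Complex.exp (Complex.I * ((α + lam * n) / (q : ℝ))))
       else Finsupp.single (n - p) c) := by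
  rw [Vop, Finsupp.lsum_single, LinearMap.toSpanSingleton_apply]
  split_ifs with hp
  · rw [Finsupp.smul_single, smul_eq_mul]
  · rw [Finsupp.smul_single, smul_eq_mul, mul_one]

/-- The formulas for the action of `a_{10}` and `a_{01}` on the basis `{ξ_n}` define
a right `A`-module structure `T^α_{pq}`: they satisfy the defining relation
`a_{10} a_{01} = e^{iλ} a_{01} a_{10}` of the irrational rotation algebra,
i.e. (for right actions) `V ∘ U = e^{iλ} (U ∘ V)`. -/
theorem Tmodule_welldefined (lam α : ℝ) (hlam : Irrational (lam / (2 * Real.pi)))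
    (p q : ℤ) (hpq : p ≠ 0 ∨ q ≠ 0) :
    (p ≠ 0 → ∀ n : ℤ,
      Uop lam α p q (Finsupp.single n 1) =
        Finsupp.single (n + q)
          (Complex.exp (Complex.I *
            ((α + lam * n + lam * q * ((p : ℝ) + 1) / 2) / (p : ℝ)))) ∧
      Vop lam α p q (Finsupp.single n 1) = Finsupp.single (n - p) 1) ∧
    (p = 0 → ∀ n : ℤ,
      Uop lam α p q (Finsupp.single n 1) = Finsupp.single (n + q) 1 ∧
      Vop lam α p q (Finsupp.single n 1) =
        Finsupp.single n (Complex.exp (Complex.I * ((α + lam * n) / (q : ℝ))))) ∧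
    Vop lam α p q ∘ₗ Uop lam α p q =
      Complex.exp (Complex.I * lam) • (Uop lam α p q ∘ₗ Vop lam α p q) := by
  refine ⟨fun hp n => ?_, fun hp n => ?_, ?_⟩
  · rw [Uop_single', Vop_single']; simp [hp]
  · rw [Uop_single', Vop_single']; simp [hp]
  · apply Finsupp.lhom_ext
    intro n c
    simp only [LinearMap.comp_apply, LinearMap.smul_apply]
    by_cases hp : p = 0
    · have hq : q ≠ 0 := hpq.resolve_left (by simp [hp])
      subst hp
      rw [Uop_single', Vop_single', if_pos rfl, if_pos rfl, Vop_single', if_pos rfl,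
        Uop_single', if_pos rfl, Finsupp.smul_single]
      have hq' : (q : ℂ) ≠ 0 := Int.cast_ne_zero.mpr hq
      have key : Complex.exp (Complex.I * ((α + lam * ((n + q : ℤ) : ℝ)) / (q : ℝ))) =
          Complex.exp (Complex.I * lam) *
            Complex.exp (Complex.I * ((α + lam * (n : ℝ)) / (q : ℝ))) := by
        rw [← Complex.exp_add]
        congr 1
        push_cast
        field_simp
        ring
      congr 1
      rw [smul_eq_mul]
      push_cast at key ⊢
      linear_combination c * key
    · rw [Uop_single', Vop_single', if_neg hp, if_neg hp, Vop_single', if_neg hp,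
        Uop_single', if_neg hp, Finsupp.smul_single]
      have hp' : (p : ℂ) ≠ 0 := Int.cast_ne_zero.mpr hp
      have key : Complex.exp (Complex.I *
            ((α + lam * (n : ℝ) + lam * q * ((p : ℝ) + 1) / 2) / (p : ℝ))) =
          Complex.exp (Complex.I * lam) *
            Complex.exp (Complex.I *
              ((α + lam * ((n - p : ℤ) : ℝ) + lam * q * ((p : ℝ) + 1) / 2) / (p : ℝ))) := by
        rw [← Complex.exp_add]
        congr 1
        push_cast
        field_simp
        ring
      rw [show n + q - p = n - p + q by omega]
      congr 1
      rw [smul_eq_mul]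
      push_cast at key ⊢
      linear_combination c * key
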